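/- arXiv:1505.02370 — 2 statements merged into one kernel-verified Lean document; each statement's English description precedes it below -/
import Mathlib

section
/- Let p be a polynomial in ℝ[x₁,…,x_d]. Then the smallest linear subspace containing p that is both translation invariant and dilation invariant equals the linear span of the monomials {x^β : β ∈ ℕ^d and there exists α ∈ ℕ^d with β ≤ α componentwise and the coefficient of x^α in p nonzero}. In particular, if the coefficient of x^α in p is nonzero, then x^β lies in this subspace for every β ≤ α. -/
open MvPolynomial Finset

private lemma monomial_one_eq_prod {d : ℕ} (α : Fin d →₀ ℕ) :
    (monomial α (1:ℝ)) = ∏ j, (X j : MvPolynomial (Fin d) ℝ) ^ (α j) := by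
  rw [monomial_eq, Finsupp.prod_pow]; simp

private lemma bind_monomial {d : ℕ} (f : Fin d → MvPolynomial (Fin d) ℝ) (α : Fin d →₀ ℕ) :
    bind₁ f (monomial α (1:ℝ)) = ∏ j, (f j) ^ (α j) := by
  rw [monomial_one_eq_prod, map_prod]; simp

private lemma dilate_monomial {d : ℕ} (y : Fin d → ℝ) (α : Fin d →₀ ℕ) (c : ℝ) :
    bind₁ (fun i => (C (y i) : MvPolynomial (Fin d) ℝ) * X i) (monomial α c) =
      (∏ i, y i ^ α i) • monomial α c := by
  have h : (monomial α c : MvPolynomial (Fin d) ℝ) = C c * monomial α 1 := by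
    rw [C_mul_monomial, mul_one]
  rw [h, map_mul, bind₁_C_right, bind_monomial, smul_eq_C_mul]
  simp only [mul_pow, Finset.prod_mul_distrib, ← map_pow (C : ℝ →+* MvPolynomial (Fin d) ℝ),
    ← map_prod (C : ℝ →+* MvPolynomial (Fin d) ℝ), monomial_one_eq_prod]
  ring

private lemma dilate_poly {d : ℕ} (y : Fin d → ℝ) (p : MvPolynomial (Fin d) ℝ) :
    bind₁ (fun i => (C (y i) : MvPolynomial (Fin d) ℝ) * X i) p =
      ∑ α ∈ p.support, (∏ i, y i ^ α i) • monomial α (coeff α p) := by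
  conv_lhs => rw [p.as_sum]
  rw [map_sum]
  exact Finset.sum_congr rfl fun α _ => dilate_monomial y α _

private lemma span_of_support {d : ℕ} (q : MvPolynomial (Fin d) ℝ)
    (G : Set (MvPolynomial (Fin d) ℝ))
    (h : ∀ γ ∈ q.support, monomial γ (1:ℝ) ∈ Submodule.span ℝ G) :
    q ∈ Submodule.span ℝ G := by
  have hq : q = ∑ γ ∈ q.support, coeff γ q • monomial γ (1:ℝ) := by
    conv_lhs => rw [q.as_sum]
    exact Finset.sum_congr rfl fun γ _ => by rw [smul_monomial, smul_eq_mul, mul_one]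
  rw [hq]
  exact Submodule.sum_mem _ fun γ hγ => Submodule.smul_mem _ _ (h γ hγ)

section keys
private lemma translate_monomial_coord {d : ℕ} (i : Fin d) (t : ℝ) (α : Fin d →₀ ℕ) :
    bind₁ (fun j => (X j : MvPolynomial (Fin d) ℝ) + C (if j = i then t else 0))
        (monomial α (1:ℝ)) =
      ∑ k ∈ Finset.range (α i + 1), t ^ k •
        (((α i).choose k : ℝ) • monomial (Finsupp.update α i (α i - k)) (1:ℝ)) := by
  rw [bind_monomial, ← Finset.mul_prod_erase univ _ (mem_univ i)]
  have hrest : ∀ j ∈ univ.erase i,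
      ((X j : MvPolynomial (Fin d) ℝ) + C (if j = i then t else 0)) ^ (α j) = X j ^ α j := by
    intro j hj
    rw [if_neg (Finset.mem_erase.1 hj).1]; simp
  rw [Finset.prod_congr rfl hrest, if_pos rfl, add_comm (X i) (C t), add_pow, Finset.sum_mul]
  apply Finset.sum_congr rfl
  intro k hk
  have hm : (monomial (Finsupp.update α i (α i - k)) (1:ℝ)) =
      X i ^ (α i - k) * ∏ j ∈ univ.erase i, (X j : MvPolynomial (Fin d) ℝ) ^ α j := by
    rw [monomial_one_eq_prod, ← Finset.mul_prod_erase univ _ (mem_univ i)]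
    congr 1
    · simp [Finsupp.coe_update]
    · exact Finset.prod_congr rfl fun j hj => by
        simp [Finsupp.coe_update, Function.update_apply, (Finset.mem_erase.1 hj).1]
  rw [hm]
  simp only [smul_smul, smul_eq_C_mul, map_mul, map_pow, map_natCast]
  ring

private lemma key1 {V : Type*} [AddCommGroup V] [Module ℝ V]
    (W : Submodule ℝ V) (n : ℕ) (v : ℕ → V)
    (h : ∀ t : ℝ, ∑ k ∈ Finset.range n, t ^ k • v k ∈ W) :
    ∀ k < n, v k ∈ W := by
  intro k hk
  suffices hψ : ∀ φ : Module.Dual ℝ (V ⧸ W), (φ.comp W.mkQ) (v k) = 0 by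
    rw [← Submodule.Quotient.mk_eq_zero, ← Module.forall_dual_apply_eq_zero_iff ℝ]
    intro φ
    simpa using hψ φ
  intro φ
  set ψ := φ.comp W.mkQ with hψdef
  set q : Polynomial ℝ :=
    ∑ j ∈ Finset.range n, Polynomial.C (ψ (v j)) * Polynomial.X ^ j with hqdef
  have hq : q = 0 := by
    apply Polynomial.funext
    intro t
    have h1 : q.eval t = ψ (∑ j ∈ Finset.range n, t ^ j • v j) := by
      rw [map_sum ψ]
      simp only [hqdef, Polynomial.eval_finset_sum, Polynomial.eval_mul, Polynomial.eval_C,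
        Polynomial.eval_pow, Polynomial.eval_X, map_smul, smul_eq_mul]
      exact Finset.sum_congr rfl fun _ _ => mul_comm _ _
    have h2 : ψ (∑ j ∈ Finset.range n, t ^ j • v j) = 0 := by
      rw [hψdef, LinearMap.comp_apply, Submodule.mkQ_apply,
        (Submodule.Quotient.mk_eq_zero W).2 (h t), map_zero]
    rw [h1, h2, Polynomial.eval_zero]
  have h2 := congrArg (Polynomial.coeff · k) hq
  simpa [hqdef, Polynomial.coeff_X_pow, Finset.sum_ite_eq, hk] using h2

private lemma key_mv {d : ℕ} {V : Type*} [AddCommGroup V] [Module ℝ V]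
    (W : Submodule ℝ V) (A : Finset (Fin d →₀ ℕ)) (v : (Fin d →₀ ℕ) → V)
    (h : ∀ y : Fin d → ℝ, ∑ β ∈ A, (∏ i, y i ^ β i) • v β ∈ W) :
    ∀ α ∈ A, v α ∈ W := by
  intro α hα
  suffices hψ : ∀ φ : Module.Dual ℝ (V ⧸ W), (φ.comp W.mkQ) (v α) = 0 by
    rw [← Submodule.Quotient.mk_eq_zero, ← Module.forall_dual_apply_eq_zero_iff ℝ]
    intro φ
    simpa using hψ φ
  intro φ
  set ψ := φ.comp W.mkQ with hψdef
  set q : MvPolynomial (Fin d) ℝ := ∑ β ∈ A, monomial β (ψ (v β)) with hqdef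
  have hq : q = 0 := by
    apply MvPolynomial.funext
    intro y
    have h1 : eval y q = ψ (∑ β ∈ A, (∏ i, y i ^ β i) • v β) := by
      rw [map_sum ψ]
      simp [hqdef, eval_monomial, Finsupp.prod_pow, mul_comm]
    have h2 : ψ (∑ β ∈ A, (∏ i, y i ^ β i) • v β) = 0 := by
      rw [hψdef, LinearMap.comp_apply, Submodule.mkQ_apply,
        (Submodule.Quotient.mk_eq_zero W).2 (h y), map_zero]
    rw [h1, h2, map_zero]
  have h2 := congrArg (coeff α) hq
  simpa [hqdef, coeff_sum, coeff_monomial, Finset.sum_ite_eq, hα] using h2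

private lemma lower_coord {d : ℕ} (W : Submodule ℝ (MvPolynomial (Fin d) ℝ))
    (htrans : ∀ q ∈ W, ∀ y : Fin d → ℝ,
      bind₁ (fun i => (X i : MvPolynomial (Fin d) ℝ) + C (y i)) q ∈ W)
    {α : Fin d →₀ ℕ} (hα : monomial α (1:ℝ) ∈ W) (i : Fin d) (m : ℕ) (hm : m ≤ α i) :
    monomial (Finsupp.update α i m) (1:ℝ) ∈ W := by
  have h := key1 W (α i + 1)
    (fun k => ((α i).choose k : ℝ) • monomial (Finsupp.update α i (α i - k)) (1:ℝ))
    (fun t => by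
      rw [← translate_monomial_coord]
      exact htrans _ hα _)
  have hk := h (α i - m) (by omega)
  have hsub : α i - (α i - m) = m := by omega
  simp only [hsub] at hk
  have hc : (((α i).choose (α i - m) : ℕ) : ℝ) ≠ 0 := by
    exact_mod_cast (Nat.choose_pos (by omega : α i - m ≤ α i)).ne'
  have h3 := W.smul_mem ((((α i).choose (α i - m) : ℕ) : ℝ))⁻¹ hk
  rwa [smul_smul, inv_mul_cancel₀ hc, one_smul] at h3

private lemma descend_aux {d : ℕ} (W : Submodule ℝ (MvPolynomial (Fin d) ℝ))
    (htrans : ∀ q ∈ W, ∀ y : Fin d → ℝ,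
      bind₁ (fun i => (X i : MvPolynomial (Fin d) ℝ) + C (y i)) q ∈ W) :
    ∀ N (α β : Fin d →₀ ℕ), β ≤ α → monomial α (1:ℝ) ∈ W → (∑ i, (α i - β i)) ≤ N →
      monomial β (1:ℝ) ∈ W := by
  intro N
  induction N with
  | zero =>
    intro α β hle hα hsum
    have hβα : β = α := by
      ext i
      have h1 : α i - β i = 0 :=
        Finset.sum_eq_zero_iff.1 (Nat.le_zero.1 hsum) i (mem_univ i)
      have h2 : β i ≤ α i := Finsupp.le_def.1 hle i
      omega
    rwa [hβα]
  | succ N ih =>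
    intro α β hle hα hsum
    by_cases hba : β = α
    · rwa [hba]
    · have hex : ∃ i, β i < α i := by
        by_contra hcon
        push_neg at hcon
        exact hba (Finsupp.ext fun i => le_antisymm (Finsupp.le_def.1 hle i) (hcon i))
      obtain ⟨i, hi⟩ := hex
      set α' := Finsupp.update α i (β i) with hα'def
      have hα' : monomial α' (1:ℝ) ∈ W := lower_coord W htrans hα i (β i) hi.le
      have hle' : β ≤ α' := by
        rw [Finsupp.le_def]
        intro j
        by_cases hj : j = i
        · subst hj; simp [hα'def, Finsupp.coe_update]
        · simpa [hα'def, Finsupp.coe_update, Function.update_apply, hj] using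
            Finsupp.le_def.1 hle j
      refine ih α' β hle' hα' ?_
      have hlt : ∑ j, (α' j - β j) < ∑ j, (α j - β j) := by
        apply Finset.sum_lt_sum
        · intro j _
          by_cases hj : j = i
          · subst hj; simp [hα'def, Finsupp.coe_update]
          · simp [hα'def, Finsupp.coe_update, Function.update_apply, hj]
        · exact ⟨i, mem_univ i, by simp [hα'def, Finsupp.coe_update]; omega⟩
      omega
end keys
private lemma translate_support {d : ℕ} (y : Fin d → ℝ) (δ : Fin d →₀ ℕ) :
    ∀ γ ∈ (bind₁ (fun j => (X j : MvPolynomial (Fin d) ℝ) + C (y j))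
        (monomial δ (1:ℝ))).support, γ ≤ δ := by
  intro γ hγ
  rw [Finsupp.le_def]
  intro j
  refine le_trans (monomial_le_degreeOf j hγ) ?_
  rw [bind_monomial]
  refine le_trans (degreeOf_prod_le j univ _) ?_
  have hterm : ∀ k : Fin d,
      degreeOf j (((X k : MvPolynomial (Fin d) ℝ) + C (y k)) ^ (δ k)) ≤
        if k = j then δ j else 0 := by
    intro k
    refine le_trans (degreeOf_pow_le j _ _) ?_
    have h1 : degreeOf j ((X k : MvPolynomial (Fin d) ℝ) + C (y k)) ≤ if j = k then 1 else 0 := by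
      refine le_trans (degreeOf_add_le j _ _) ?_
      simp [degreeOf_X]
    by_cases hk : k = j
    · subst hk
      have h2 : degreeOf k ((X k : MvPolynomial (Fin d) ℝ) + C (y k)) ≤ 1 := by simpa using h1
      calc δ k * degreeOf k ((X k : MvPolynomial (Fin d) ℝ) + C (y k)) ≤ δ k * 1 :=
            Nat.mul_le_mul_left (δ k) h2
        _ = if k = k then δ k else 0 := by simp
    · have : degreeOf j ((X k : MvPolynomial (Fin d) ℝ) + C (y k)) = 0 := by
        have := h1
        rw [if_neg (Ne.symm hk)] at this
        omega
      simp [hk, this]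
  refine le_trans (Finset.sum_le_sum fun k _ => hterm k) ?_
  simp

theorem stmt_4 (d : ℕ) (p : MvPolynomial (Fin d) ℝ) :
    sInf {W : Submodule ℝ (MvPolynomial (Fin d) ℝ) | p ∈ W ∧
        (∀ q ∈ W, ∀ y : Fin d → ℝ,
          bind₁ (fun i => (X i : MvPolynomial (Fin d) ℝ) + C (y i)) q ∈ W) ∧
        (∀ q ∈ W, ∀ y : Fin d → ℝ,
          bind₁ (fun i => (C (y i) : MvPolynomial (Fin d) ℝ) * X i) q ∈ W)} =
      Submodule.span ℝ {q : MvPolynomial (Fin d) ℝ |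
        ∃ β α : Fin d →₀ ℕ, β ≤ α ∧ coeff α p ≠ 0 ∧ q = monomial β (1 : ℝ)} ∧
    ∀ α : Fin d →₀ ℕ, coeff α p ≠ 0 → ∀ β ≤ α,
      monomial β (1 : ℝ) ∈
        sInf {W : Submodule ℝ (MvPolynomial (Fin d) ℝ) | p ∈ W ∧
          (∀ q ∈ W, ∀ y : Fin d → ℝ,
            bind₁ (fun i => (X i : MvPolynomial (Fin d) ℝ) + C (y i)) q ∈ W) ∧
          (∀ q ∈ W, ∀ y : Fin d → ℝ,
            bind₁ (fun i => (C (y i) : MvPolynomial (Fin d) ℝ) * X i) q ∈ W)} := by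
  set Gen : Set (MvPolynomial (Fin d) ℝ) :=
    {q : MvPolynomial (Fin d) ℝ |
      ∃ β α : Fin d →₀ ℕ, β ≤ α ∧ coeff α p ≠ 0 ∧ q = monomial β (1 : ℝ)} with hGen
  have part2 : ∀ α : Fin d →₀ ℕ, coeff α p ≠ 0 → ∀ β ≤ α,
      monomial β (1 : ℝ) ∈
        sInf {W : Submodule ℝ (MvPolynomial (Fin d) ℝ) | p ∈ W ∧
          (∀ q ∈ W, ∀ y : Fin d → ℝ,
            bind₁ (fun i => (X i : MvPolynomial (Fin d) ℝ) + C (y i)) q ∈ W) ∧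
          (∀ q ∈ W, ∀ y : Fin d → ℝ,
            bind₁ (fun i => (C (y i) : MvPolynomial (Fin d) ℝ) * X i) q ∈ W)} := by
    intro α hα β hβ
    rw [Submodule.mem_sInf]
    rintro W ⟨hp, htrans, hdil⟩
    have h1 : monomial α (coeff α p) ∈ W := by
      refine key_mv W p.support (fun γ => monomial γ (coeff γ p)) ?_ α (mem_support_iff.2 hα)
      intro y
      rw [← dilate_poly]
      exact hdil p hp y
    have h2 : monomial α (1:ℝ) ∈ W := by
      have h3 := W.smul_mem (coeff α p)⁻¹ h1
      rwa [smul_monomial, smul_eq_mul, inv_mul_cancel₀ hα] at h3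
    exact descend_aux W htrans (∑ i, (α i - β i)) α β hβ h2 le_rfl
  refine ⟨le_antisymm ?_ ?_, part2⟩
  · apply sInf_le
    refine ⟨?_, ?_, ?_⟩
    · apply span_of_support
      intro γ hγ
      exact Submodule.subset_span ⟨γ, γ, le_rfl, mem_support_iff.1 hγ, rfl⟩
    · intro q hq y
      have hmap : Submodule.span ℝ Gen ≤ Submodule.comap
          (bind₁ fun i => (X i : MvPolynomial (Fin d) ℝ) + C (y i)).toLinearMap
          (Submodule.span ℝ Gen) := by
        rw [Submodule.span_le]
        rintro _ ⟨β, α, hβα, hα, rfl⟩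
        simp only [SetLike.mem_coe, Submodule.mem_comap, AlgHom.toLinearMap_apply]
        apply span_of_support
        intro γ hγ
        exact Submodule.subset_span
          ⟨γ, α, le_trans (translate_support y β γ hγ) hβα, hα, rfl⟩
      exact hmap hq
    · intro q hq y
      have hmap : Submodule.span ℝ Gen ≤ Submodule.comap
          (bind₁ fun i => (C (y i) : MvPolynomial (Fin d) ℝ) * X i).toLinearMap
          (Submodule.span ℝ Gen) := by
        rw [Submodule.span_le]
        rintro _ ⟨β, α, hβα, hα, rfl⟩
        simp only [SetLike.mem_coe, Submodule.mem_comap, AlgHom.toLinearMap_apply]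
        rw [dilate_monomial]
        exact Submodule.smul_mem _ _
          (Submodule.subset_span ⟨β, α, hβα, hα, rfl⟩)
      exact hmap hq
  · rw [Submodule.span_le]
    rintro _ ⟨β, α, hβα, hα, rfl⟩
    exact part2 α hα β hβα
end

section
/- Let V be an ℝ-linear subspace of ℝ[x₁,…,x_d] that is both translation invariant and dilation invariant. Then V equals the linear span of the set of monomials it contains, i.e., V = span{x^α : α ∈ ℕ^d, x^α ∈ V}. -/
open MvPolynomial

private lemma scale_monomial (d : ℕ) (y : Fin d → ℝ) (α : Fin d →₀ ℕ) (c : ℝ) :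
    bind₁ (fun i => (C (y i) : MvPolynomial (Fin d) ℝ) * X i) (monomial α c)
      = monomial α ((∏ j, y j ^ α j) * c) := by
  rw [bind₁_monomial]
  have h : (∏ j, y j ^ α j) = ∏ j ∈ α.support, y j ^ α j := by
    refine (Finset.prod_subset (Finset.subset_univ _) ?_).symm
    intro x _ hx
    simp [Finsupp.notMem_support_iff.mp hx]
  rw [h, monomial_eq, Finsupp.prod]
  rw [Finset.prod_congr rfl (fun i _ => mul_pow (C (y i)) (X i) (α i)),
    Finset.prod_mul_distrib]
  rw [show (∏ i ∈ α.support, (C (y i) : MvPolynomial (Fin d) ℝ) ^ α i)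
      = C (∏ i ∈ α.support, y i ^ α i) by rw [map_prod]; simp [C_pow]]
  rw [map_mul]
  ring

private lemma coeff_scale (d : ℕ) (y : Fin d → ℝ) (p : MvPolynomial (Fin d) ℝ)
    (β : Fin d →₀ ℕ) :
    coeff β (bind₁ (fun i => (C (y i) : MvPolynomial (Fin d) ℝ) * X i) p)
      = (∏ j, y j ^ β j) * coeff β p := by
  conv_lhs => rw [← support_sum_monomial_coeff p]
  conv_rhs => rw [← support_sum_monomial_coeff p]
  rw [map_sum, coeff_sum, coeff_sum, Finset.mul_sum]
  refine Finset.sum_congr rfl ?_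
  intro α _
  rw [scale_monomial, coeff_monomial, coeff_monomial]
  by_cases h : α = β <;> simp [h]

private lemma mono_mem (d : ℕ) (V : Submodule ℝ (MvPolynomial (Fin d) ℝ))
    (hdil : ∀ p ∈ V, ∀ y : Fin d → ℝ,
      bind₁ (fun i => (C (y i) : MvPolynomial (Fin d) ℝ) * X i) p ∈ V) :
    ∀ n : ℕ, ∀ p ∈ V, p.support.card ≤ n →
      ∀ α ∈ p.support, monomial α (coeff α p) ∈ V := by
  intro n
  induction n with
  | zero => intro p _ hc α hα; simp [Finset.card_eq_zero.mp (Nat.le_zero.mp hc)] at hα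
  | succ n ih =>
    intro p hp hc α hα
    by_cases hsing : p.support ⊆ {α}
    · have hs : p.support = {α} := Finset.Subset.antisymm hsing (Finset.singleton_subset_iff.mpr hα)
      have : p = monomial α (coeff α p) := by
        conv_lhs => rw [← support_sum_monomial_coeff p]
        rw [hs, Finset.sum_singleton]
      rwa [← this]
    · obtain ⟨β, hβ, hβα⟩ : ∃ β ∈ p.support, β ≠ α := by
        by_contra h
        push_neg at h
        exact hsing fun x hx => Finset.mem_singleton.mpr (h x hx)
      obtain ⟨i, hi⟩ : ∃ i, α i ≠ β i := by
        by_contra h; push_neg at h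
        exact hβα (Finsupp.ext h).symm
      set y : Fin d → ℝ := fun j => if j = i then 2 else 1 with hy
      have hw : ∀ γ : Fin d →₀ ℕ, (∏ j, y j ^ γ j) = 2 ^ γ i := by
        intro γ
        have : ∀ j, y j ^ γ j = if j = i then (2:ℝ) ^ γ i else 1 := by
          intro j; by_cases h : j = i <;> simp [hy, h]
        rw [Finset.prod_congr rfl (fun j _ => this j), Finset.prod_ite_eq']
        simp
      set q := bind₁ (fun i => (C (y i) : MvPolynomial (Fin d) ℝ) * X i) p
        - ((2:ℝ) ^ β i) • p with hq
      have hqV : q ∈ V := Submodule.sub_mem V (hdil p hp y) (Submodule.smul_mem V _ hp)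
      have hqc : ∀ γ, coeff γ q = ((2:ℝ) ^ γ i - 2 ^ β i) * coeff γ p := by
        intro γ
        rw [hq, coeff_sub, coeff_smul, coeff_scale, hw γ, smul_eq_mul]
        ring
      have hne : ((2:ℝ) ^ α i - 2 ^ β i) ≠ 0 := by
        refine sub_ne_zero_of_ne ?_
        exact fun h => hi (pow_right_injective₀ two_pos (by norm_num) h)
      have hsub : q.support ⊆ p.support.erase β := by
        intro γ hγ
        rw [mem_support_iff, hqc γ] at hγ
        refine Finset.mem_erase.mpr ⟨?_, mem_support_iff.mpr fun h => hγ (by simp [h])⟩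
        rintro rfl; simp at hγ
      have hcard : q.support.card ≤ n := by
        have h1 := Finset.card_le_card hsub
        have h2 := Finset.card_erase_lt_of_mem hβ
        omega
      have hαq : α ∈ q.support := by
        rw [mem_support_iff, hqc α]
        exact mul_ne_zero hne (mem_support_iff.mp hα)
      have hm := ih q hqV hcard α hαq
      have : monomial α (coeff α p) = ((2:ℝ) ^ α i - 2 ^ β i)⁻¹ • monomial α (coeff α q) := by
        rw [hqc α, smul_monomial]
        congr 1
        rw [smul_eq_mul]
        field_simp
      rw [this]
      exact Submodule.smul_mem V _ hm

theorem stmt_7 (d : ℕ) (V : Submodule ℝ (MvPolynomial (Fin d) ℝ))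
    (htrans : ∀ p ∈ V, ∀ y : Fin d → ℝ,
      bind₁ (fun i => (X i : MvPolynomial (Fin d) ℝ) + C (y i)) p ∈ V)
    (hdil : ∀ p ∈ V, ∀ y : Fin d → ℝ,
      bind₁ (fun i => (C (y i) : MvPolynomial (Fin d) ℝ) * X i) p ∈ V) :
    V = Submodule.span ℝ {q : MvPolynomial (Fin d) ℝ |
      ∃ α : Fin d →₀ ℕ, q = monomial α (1 : ℝ) ∧ q ∈ V} := by
  apply le_antisymm
  · intro p hp
    rw [← support_sum_monomial_coeff p]
    refine Submodule.sum_mem _ ?_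
    intro α hα
    have hmV : monomial α (coeff α p) ∈ V :=
      mono_mem d V hdil p.support.card p hp le_rfl α hα
    have hc : coeff α p ≠ 0 := mem_support_iff.mp hα
    have h1 : monomial α (1:ℝ) ∈ V := by
      have : monomial α (1:ℝ) = (coeff α p)⁻¹ • monomial α (coeff α p) := by
        rw [smul_monomial]; congr 1; rw [smul_eq_mul]; field_simp
      rw [this]; exact Submodule.smul_mem V _ hmV
    have : monomial α (coeff α p) = (coeff α p) • monomial α (1:ℝ) := by
      rw [smul_monomial]; congr 1; simp
    rw [this]
    exact Submodule.smul_mem _ _ (Submodule.subset_span ⟨α, rfl, h1⟩)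
  · rw [Submodule.span_le]
    rintro q ⟨α, rfl, hq⟩
    exact hq
end
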